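/- arXiv:2306.15986 — 2 statements merged into one kernel-verified Lean document; each statement's English description precedes it below -/
import Mathlib

section
/- Let G be a super edge-magic graph with p vertices and q = 2p − 3 edges that contains a triangle (equivalently, has girth 3). Then every super edge-magic labeling of G has valence 3p; in particular the super edge-magic set of G satisfies σ_G = {3p} and |σ_G| = 1. -/
/-- `f` is an edge-magic labeling of the graph `G` with valence `k`:
`f` is a bijection from `V(G) ∪ E(G)` onto `{1, …, p + q}` and
`f u + f v + f uv = k` for every edge `uv`. -/
def IsEdgeMagic {V : Type*} [Fintype V] (G : SimpleGraph V)
    (f : V ⊕ G.edgeSet → ℕ) (k : ℕ) : Prop :=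
  Set.BijOn f Set.univ (Set.Icc 1 (Fintype.card V + G.edgeSet.ncard)) ∧
  ∀ u v, ∀ h : G.Adj u v,
    f (Sum.inl u) + f (Sum.inl v) + f (Sum.inr ⟨s(u, v), G.mem_edgeSet.mpr h⟩) = k

/-- `f` is a super edge-magic labeling of `G` with valence `k`: an edge-magic
labeling whose vertex labels are exactly `{1, …, p}`. -/
def IsSuperEdgeMagic {V : Type*} [Fintype V] (G : SimpleGraph V)
    (f : V ⊕ G.edgeSet → ℕ) (k : ℕ) : Prop :=
  IsEdgeMagic G f k ∧ ∀ v, f (Sum.inl v) ∈ Set.Icc 1 (Fintype.card V)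

lemma ncard_Icc_nat (a b : ℕ) : (Set.Icc a b).ncard = b + 1 - a := by
  rw [← Finset.coe_Icc, Set.ncard_coe_finset, Nat.card_Icc]

/-- Let `G` be a super edge-magic graph with `p` vertices and `q = 2p - 3`
edges that contains a triangle (equivalently, has girth `3`). Then every super
edge-magic labeling of `G` has valence `3p`; in particular the super edge-magic
set of `G` is `σ_G = {3p}` (so `|σ_G| = 1`). -/
theorem stmt_3 {V : Type*} [Fintype V] (G : SimpleGraph V) (p : ℕ)
    (hp : Fintype.card V = p) (hq : G.edgeSet.ncard = 2 * p - 3)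
    (htri : ∃ a b c : V, G.Adj a b ∧ G.Adj b c ∧ G.Adj a c)
    (hG : ∃ f k, IsSuperEdgeMagic G f k) :
    (∀ f k, IsSuperEdgeMagic G f k → k = 3 * p) ∧
    {k | ∃ f, IsSuperEdgeMagic G f k} = {3 * p} := by
  classical
  -- p ≥ 3 from the triangle
  obtain ⟨a, b, c, hab, hbc, hac⟩ := htri
  have hp3 : 3 ≤ p := by
    have h1 : ({a, b, c} : Finset V).card ≤ Fintype.card V := Finset.card_le_univ _
    have h2 : ({a, b, c} : Finset V).card = 3 := by
      rw [Finset.card_insert_of_notMem (by simp [hab.ne, hac.ne]),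
        Finset.card_insert_of_notMem (by simp [hbc.ne]), Finset.card_singleton]
    omega
  set q : ℕ := G.edgeSet.ncard with hqdef
  have key : ∀ f k, IsSuperEdgeMagic G f k → k = 3 * p := by
    rintro f k ⟨⟨hbij, hmagic⟩, hvert⟩
    have hinj : Function.Injective f :=
      Set.injOn_univ.mp hbij.injOn
    have hmaps : ∀ x, f x ∈ Set.Icc 1 (p + q) := by
      intro x
      have := hbij.mapsTo (Set.mem_univ x)
      rwa [hp] at this
    -- vertex labels are exactly Icc 1 p
    have hvrange : Set.range (fun v => f (Sum.inl v)) = Set.Icc 1 p := by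
      apply Set.eq_of_subset_of_ncard_le
      · rintro _ ⟨v, rfl⟩
        exact hp ▸ hvert v
      · have h1 : (Set.range (fun v => f (Sum.inl v))).ncard = p := by
          rw [← Set.image_univ, Set.ncard_image_of_injective _
            (fun x y h => Sum.inl_injective (hinj h)), Set.ncard_univ, Nat.card_eq_fintype_card, hp]
        rw [h1, ncard_Icc_nat]
        omega
      · exact Set.finite_Icc _ _
    -- edge labels lie in Icc (p+1) (p+q)
    have hedge : ∀ e : G.edgeSet, f (Sum.inr e) ∈ Set.Icc (p + 1) (p + q) := by
      intro e
      have h1 := hmaps (Sum.inr e)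
      rw [Set.mem_Icc] at h1 ⊢
      refine ⟨?_, h1.2⟩
      by_contra h
      push_neg at h
      have hmem : f (Sum.inr e) ∈ Set.Icc 1 p := ⟨h1.1, by omega⟩
      rw [← hvrange] at hmem
      obtain ⟨v, hv⟩ := hmem
      exact (by simp : (Sum.inl v : V ⊕ G.edgeSet) ≠ Sum.inr e) (hinj hv)
    -- the map e ↦ k - f(e) takes values in Icc 3 (2p-1)
    have hSmem : ∀ e : G.edgeSet,
        (3 ≤ k - f (Sum.inr e) ∧ k - f (Sum.inr e) ≤ 2 * p - 1) ∧ f (Sum.inr e) ≤ k := by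
      rintro ⟨e, he⟩
      induction e using Sym2.inductionOn with
      | hf u v =>
        have hadj : G.Adj u v := G.mem_edgeSet.mp he
        have hm := hmagic u v hadj
        have hfe : f (Sum.inr (⟨s(u, v), he⟩ : G.edgeSet)) =
            f (Sum.inr ⟨s(u, v), G.mem_edgeSet.mpr hadj⟩) := rfl
        have hu := hp ▸ hvert u
        have hv := hp ▸ hvert v
        rw [Set.mem_Icc] at hu hv
        have hne : f (Sum.inl u) ≠ f (Sum.inl v) :=
          fun h => hadj.ne (Sum.inl_injective (hinj h))
        rw [hfe]
        omega
    set S : G.edgeSet → ℕ := fun e => k - f (Sum.inr e) with hSdef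
    have hSinj : Function.Injective S := by
      intro e1 e2 h
      have h1 := (hSmem e1).2
      have h2 := (hSmem e2).2
      have : f (Sum.inr e1) = f (Sum.inr e2) := by simp only [hSdef] at h; omega
      exact Sum.inr_injective (hinj this)
    have hrange : Set.range S = Set.Icc 3 (2 * p - 1) := by
      apply Set.eq_of_subset_of_ncard_le
      · rintro _ ⟨e, rfl⟩
        exact Set.mem_Icc.mpr (hSmem e).1
      · have h1 : (Set.range S).ncard = q := by
          rw [← Set.image_univ, Set.ncard_image_of_injective _ hSinj, Set.ncard_univ,
            Nat.card_coe_set_eq]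
        rw [h1, ncard_Icc_nat]
        omega
      · exact Set.finite_Icc _ _
    obtain ⟨e3, he3⟩ : (3 : ℕ) ∈ Set.range S := by
      rw [hrange]; exact Set.mem_Icc.mpr ⟨le_refl 3, by omega⟩
    obtain ⟨e2p, he2p⟩ : (2 * p - 1 : ℕ) ∈ Set.range S := by
      rw [hrange]; exact Set.mem_Icc.mpr ⟨by omega, le_refl _⟩
    have h3le := (hSmem e3).2
    have h3ub := (hedge e3).2
    have h2ple := (hSmem e2p).2
    have h2plb := (hedge e2p).1
    simp only [hSdef] at he3 he2p
    omega
  refine ⟨key, ?_⟩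
  ext k
  simp only [Set.mem_setOf_eq, Set.mem_singleton_iff]
  constructor
  · rintro ⟨f, hf⟩
    exact key f k hf
  · rintro rfl
    obtain ⟨f, k', hf⟩ := hG
    exact ⟨f, (key f k' hf) ▸ hf⟩
end

section
/- For all positive integers n and l, the set S(T_1) of valences of type-T_1 super edge-magic labelings of K_{1,n} ∪ lK_1 consists of consecutive integers: whenever k_1, k_2 ∈ S(T_1) and k is an integer with k_1 ≤ k ≤ k_2, then k ∈ S(T_1). -/
/-- The graph `K_{1,n} ∪ lK_1`: the disjoint union of the star `K_{1,n}`
(with center `0` and leaves `1, …, n`) and `l` isolated vertices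
(`n+1, …, n+l`), on `n + l + 1` vertices. -/
def starUnion (n l : ℕ) : SimpleGraph (Fin (n + l + 1)) where
  Adj u v := (u = 0 ∧ v ≠ 0 ∧ (v : ℕ) ≤ n) ∨ (v = 0 ∧ u ≠ 0 ∧ (u : ℕ) ≤ n)
  symm := ⟨fun u v h => h.symm⟩
  loopless := ⟨fun v h => by rcases h with ⟨h1, h2, _⟩ | ⟨h1, h2, _⟩ <;> exact h2 h1⟩

def Glab (n c a : ℕ) (x : ℕ) : ℕ :=
  if x = 0 then c else if x ≤ n then a + x - 1
  else if x - n < c then x - n else if x - n + 1 < a then x - n + 1 else x + 1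

def GlabInv (n c a : ℕ) (m : ℕ) : ℕ :=
  if m = c then 0 else if a ≤ m ∧ m ≤ a + n - 1 then m - a + 1
  else if m < c then n + m else if m < a then n + m - 1 else m - 1

lemma Glab_bounds {n l c a : ℕ} (hn : 1 ≤ n) (hc : 1 ≤ c) (hca : c < a)
    (ha : a + n - 1 ≤ n + l + 1) :
    ∀ x ≤ n + l, 1 ≤ Glab n c a x ∧ Glab n c a x ≤ n + l + 1 := by
  intro x hx
  unfold Glab
  split_ifs <;> first | contradiction | omega

lemma Glab_left {n l c a : ℕ} (hn : 1 ≤ n) (hc : 1 ≤ c) (hca : c < a)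
    (ha : a + n - 1 ≤ n + l + 1) :
    ∀ x ≤ n + l, GlabInv n c a (Glab n c a x) = x := by
  intro x hx
  unfold Glab GlabInv
  split_ifs <;> first | contradiction | omega

lemma Glab_right {n l c a : ℕ} (hn : 1 ≤ n) (hc : 1 ≤ c) (hca : c < a)
    (ha : a + n - 1 ≤ n + l + 1) :
    ∀ m, 1 ≤ m → m ≤ n + l + 1 →
    Glab n c a (GlabInv n c a m) = m ∧ GlabInv n c a m ≤ n + l := by
  intro m h1 h2
  unfold Glab GlabInv
  split_ifs <;> first | contradiction | omega

lemma edge_mem {n l : ℕ} {e : Sym2 (Fin (n+l+1))} (he : e ∈ (starUnion n l).edgeSet) :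
    ∃ v : Fin (n+l+1), v ≠ 0 ∧ (v:ℕ) ≤ n ∧ e = s(0, v) := by
  induction e using Sym2.ind with
  | _ u w =>
    rw [SimpleGraph.mem_edgeSet] at he
    rcases he with ⟨h1,h2,h3⟩|⟨h1,h2,h3⟩
    · exact ⟨w, h2, h3, by rw [h1]⟩
    · exact ⟨u, h2, h3, by rw [h1, Sym2.eq_swap]⟩

lemma edge_mem' {n l : ℕ} {v : Fin (n+l+1)} (h1 : v ≠ 0) (h2 : (v:ℕ) ≤ n) :
    s((0 : Fin (n+l+1)), v) ∈ (starUnion n l).edgeSet :=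
  (SimpleGraph.mem_edgeSet _).mpr (Or.inl ⟨rfl, h1, h2⟩)

lemma edgeSet_ncard (n l : ℕ) : (starUnion n l).edgeSet.ncard = n := by
  have h : (starUnion n l).edgeSet
      = (fun v : Fin (n+l+1) => s((0:Fin (n+l+1)), v)) '' {v | v ≠ 0 ∧ (v:ℕ) ≤ n} := by
    ext e
    constructor
    · intro he
      obtain ⟨v, h1, h2, h3⟩ := edge_mem he
      exact ⟨v, ⟨h1, h2⟩, h3.symm⟩
    · rintro ⟨v, ⟨h1, h2⟩, rfl⟩
      exact edge_mem' h1 h2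
  rw [h, Set.ncard_image_of_injOn (fun x _ y _ hxy => Sym2.congr_right.mp hxy)]
  have h2 : {v : Fin (n+l+1) | v ≠ 0 ∧ (v:ℕ) ≤ n}
      = Fin.val ⁻¹' (Set.Icc 1 n) := by
    ext v
    simp only [Set.mem_setOf_eq, Set.mem_preimage, Set.mem_Icc]
    constructor
    · rintro ⟨h1, h2⟩
      refine ⟨?_, h2⟩
      rcases Nat.eq_zero_or_pos (v : ℕ) with h | h
      · exact absurd (Fin.ext h) h1
      · exact h
    · rintro ⟨h1, h2⟩
      exact ⟨by intro h; simp [h] at h1, h2⟩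
  rw [h2]
  rw [← Set.ncard_image_of_injOn (f := Fin.val) (fun x _ y _ h => Fin.ext h)]
  have h3 : Fin.val '' (Fin.val ⁻¹' (Set.Icc 1 n) : Set (Fin (n+l+1))) = Set.Icc 1 n := by
    apply Set.image_preimage_eq_of_subset
    intro m hm
    simp only [Set.mem_Icc] at hm
    exact ⟨⟨m, by omega⟩, rfl⟩
  rw [h3, ← Finset.coe_Icc, Set.ncard_coe_finset, Nat.card_Icc]; omega

def Elab (n l : ℕ) : Sym2 (Fin (n+l+1)) → ℕ :=
  Sym2.lift ⟨fun u v => (n+l+1) + n + 1 - ((u:ℕ)+(v:ℕ)), fun u v => by simp only []; omega⟩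

lemma Elab_mk (n l : ℕ) (u v : Fin (n+l+1)) :
    Elab n l s(u, v) = (n+l+1) + n + 1 - ((u:ℕ)+(v:ℕ)) := rfl

lemma fin_ne0 {m : ℕ} {v : Fin (m+1)} : v ≠ 0 ↔ (v:ℕ) ≠ 0 := by
  constructor
  · intro h h'
    exact h (Fin.ext (by simpa using h'))
  · intro h h'
    exact h (by simp [h'])
lemma Glab_zero (n c a : ℕ) : Glab n c a 0 = c := by unfold Glab; simp

lemma Glab_leaf {n c a x : ℕ} (hv : x ≠ 0) (hx : x ≤ n) :
    Glab n c a x = a + x - 1 := by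
  unfold Glab
  split_ifs <;> omega

lemma construct (n l c a : ℕ) (hn : 1 ≤ n) (hl : 1 ≤ l) (hc : 1 ≤ c) (hca : c < a)
    (ha : a + n - 1 ≤ n + l + 1) :
    ∃ f, IsSuperEdgeMagic (starUnion n l) f (c + a + (n+l+1) + n) ∧
      ∀ v : Fin (n + l + 1), v ≠ 0 → (v : ℕ) ≤ n →
        f (Sum.inl 0) < f (Sum.inl v) := by
  have hcard : Fintype.card (Fin (n+l+1)) + (starUnion n l).edgeSet.ncard = (n+l+1) + n := by
    rw [Fintype.card_fin, edgeSet_ncard]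
  refine ⟨fun x => match x with
    | Sum.inl i => Glab n c a (i : ℕ)
    | Sum.inr e => Elab n l e.1, ⟨⟨?_, ?_⟩, ?_⟩, ?_⟩
  · -- BijOn
    rw [hcard]
    refine ⟨?_, ?_, ?_⟩
    · -- MapsTo
      rintro (i | ⟨e, he⟩) -
      · have := Glab_bounds (l := l) hn hc hca ha i (by omega)
        simp only [Set.mem_Icc]
        omega
      · obtain ⟨v, h1, h2, h3⟩ := edge_mem he
        have hv : (v:ℕ) ≠ 0 := fin_ne0.mp h1
        simp only [h3, Elab_mk, Set.mem_Icc, Fin.val_zero]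
        omega
    · -- InjOn
      rintro (i | ⟨e, he⟩) - (j | ⟨e', he'⟩) - hf
      · simp only at hf
        have h1 := Glab_left (l := l) hn hc hca ha i (by omega)
        have h2 := Glab_left (l := l) hn hc hca ha j (by omega)
        rw [hf] at h1
        exact congrArg Sum.inl (Fin.ext (h1.symm.trans h2))
      · exfalso
        obtain ⟨v, h1, h2, h3⟩ := edge_mem he'
        have hv : (v:ℕ) ≠ 0 := fin_ne0.mp h1
        have hb := Glab_bounds (l := l) hn hc hca ha i (by omega)
        simp only [h3, Elab_mk, Fin.val_zero] at hf
        omega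
      · exfalso
        obtain ⟨v, h1, h2, h3⟩ := edge_mem he
        have hv : (v:ℕ) ≠ 0 := fin_ne0.mp h1
        have hb := Glab_bounds (l := l) hn hc hca ha j (by omega)
        simp only [h3, Elab_mk, Fin.val_zero] at hf
        omega
      · obtain ⟨v, h1, h2, h3⟩ := edge_mem he
        obtain ⟨v', h1', h2', h3'⟩ := edge_mem he'
        have hv : (v:ℕ) ≠ 0 := fin_ne0.mp h1
        have hv' : (v':ℕ) ≠ 0 := fin_ne0.mp h1'
        simp only [h3, h3', Elab_mk, Fin.val_zero] at hf
        have : (v:ℕ) = (v':ℕ) := by omega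
        have hvv : v = v' := Fin.ext this
        exact congrArg Sum.inr (Subtype.ext (show e = e' from by rw [h3, h3', hvv]))
    · -- SurjOn
      intro m hm
      simp only [Set.mem_Icc] at hm
      by_cases hml : m ≤ n + l + 1
      · obtain ⟨hg, hlt⟩ := Glab_right (l := l) hn hc hca ha m hm.1 hml
        refine ⟨Sum.inl ⟨GlabInv n c a m, by omega⟩, trivial, ?_⟩
        simpa using hg
      · have hv1 : 1 ≤ (n+l+1) + n + 1 - m := by omega
        have hv2 : (n+l+1) + n + 1 - m ≤ n := by omega
        set vf : Fin (n+l+1) := ⟨(n+l+1) + n + 1 - m, by omega⟩ with hvf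
        have hvne : vf ≠ 0 := fin_ne0.mpr (by simp [hvf]; omega)
        refine ⟨Sum.inr ⟨s(0, vf), edge_mem' hvne hv2⟩, trivial, ?_⟩
        simp only [Elab_mk, Fin.val_zero, hvf]
        omega
  · -- magic sums
    intro u v h
    rcases h with ⟨h1, h2, h3⟩ | ⟨h1, h2, h3⟩
    · subst h1
      have hv : (v:ℕ) ≠ 0 := fin_ne0.mp h2
      have hgv := Glab_leaf (c := c) (a := a) hv h3
      simp only [Elab_mk, Fin.val_zero, Glab_zero, hgv]
      omega
    · subst h1
      have hu : (u:ℕ) ≠ 0 := fin_ne0.mp h2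
      have hgu := Glab_leaf (c := c) (a := a) hu h3
      simp only [Elab_mk, Fin.val_zero, Glab_zero, hgu]
      omega
  · -- vertex range
    intro v
    have := Glab_bounds (l := l) hn hc hca ha v (by omega)
    simp only [Set.mem_Icc, Fintype.card_fin]
    exact this
  · -- T1
    intro v h1 h2
    have hv : (v:ℕ) ≠ 0 := fin_ne0.mp h1
    have hgv := Glab_leaf (c := c) (a := a) hv h2
    simp only [Fin.val_zero, Glab_zero, hgv]
    omega
set_option maxHeartbeats 2000000 in
lemma bounds {n l k : ℕ} (hn : 1 ≤ n) (hl : 1 ≤ l)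
    (h : ∃ f, IsSuperEdgeMagic (starUnion n l) f k ∧
      ∀ v : Fin (n + l + 1), v ≠ 0 → (v : ℕ) ≤ n →
        f (Sum.inl 0) < f (Sum.inl v)) :
    2*n + l + 4 ≤ k ∧ k ≤ 2*n + 3*l + 4 := by
  obtain ⟨f, ⟨⟨hbij, hmagic⟩, hrange⟩, hT1⟩ := h
  have hcard : Fintype.card (Fin (n+l+1)) + (starUnion n l).edgeSet.ncard = (n+l+1) + n := by
    rw [Fintype.card_fin, edgeSet_ncard]
  rw [hcard] at hbij
  simp only [Fintype.card_fin, Set.mem_Icc] at hrange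
  set c := f (Sum.inl 0) with hcdef
  have hc := hrange 0
  -- find the edge with a given label m ∈ [n+l+2, 2n+l+1], get a leaf v with
  -- c + f(inl v) + m = k
  have key : ∀ m, n + l + 1 < m → m ≤ (n+l+1) + n →
      ∃ v : Fin (n+l+1), v ≠ 0 ∧ (v:ℕ) ≤ n ∧ c + f (Sum.inl v) + m = k := by
    intro m hm1 hm2
    obtain ⟨x, -, hx⟩ := hbij.2.2 (Set.mem_Icc.mpr ⟨by omega, hm2⟩)
    match x with
    | Sum.inl w => exact absurd hx (by have := hrange w; omega)
    | Sum.inr ⟨e, he⟩ =>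
      obtain ⟨v, h1, h2, h3⟩ := edge_mem he
      refine ⟨v, h1, h2, ?_⟩
      have hadj : (starUnion n l).Adj 0 v := Or.inl ⟨rfl, h1, h2⟩
      have := hmagic 0 v hadj
      have heq : (⟨e, he⟩ : (starUnion n l).edgeSet)
          = ⟨s(0, v), (starUnion n l).mem_edgeSet.mpr hadj⟩ := Subtype.ext h3
      rw [heq] at hx
      rw [hx] at this
      exact this
  constructor
  · obtain ⟨v, h1, h2, h3⟩ := key ((n+l+1) + n) (by omega) le_rfl
    have := hT1 v h1 h2
    omega
  · obtain ⟨v, h1, h2, h3⟩ := key (n+l+2) (by omega) (by omega)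
    have hv := hrange v
    -- show c + n ≤ n + l + 1
    have hcn : c + n ≤ n + l + 1 := by
      classical
      set T : Finset ℕ := (Finset.Icc 1 n).image
        (fun w => f (Sum.inl ⟨w % (n+l+1), Nat.mod_lt _ (by omega)⟩)) with hT
      have hTcard : T.card = n := by
        rw [hT, Finset.card_image_of_injOn, Nat.card_Icc]
        · omega
        · intro w1 hw1 w2 hw2 heq
          simp only [Finset.coe_Icc, Set.mem_Icc] at hw1 hw2
          have := hbij.2.1 (Set.mem_univ _) (Set.mem_univ _) heq
          have h2 := congrArg (fun x => match x with
            | Sum.inl i => (i : ℕ) | Sum.inr _ => 0) this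
          simp only at h2
          rwa [Nat.mod_eq_of_lt (by omega), Nat.mod_eq_of_lt (by omega)] at h2
      have hTsub : T ⊆ Finset.Icc (c+1) (n+l+1) := by
        intro x hx
        rw [hT, Finset.mem_image] at hx
        obtain ⟨w, hw, hwx⟩ := hx
        simp only [Finset.mem_Icc] at hw
        have hmod : w % (n+l+1) = w := Nat.mod_eq_of_lt (by omega)
        set vf : Fin (n+l+1) := ⟨w % (n+l+1), Nat.mod_lt _ (by omega)⟩ with hvf
        have hne : vf ≠ 0 := by
          intro hh
          have := congrArg Fin.val hh
          simp [hvf, hmod] at this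
          omega
        have hle : (vf : ℕ) ≤ n := by simp [hvf, hmod]; omega
        have := hT1 vf hne hle
        have := hrange vf
        rw [Finset.mem_Icc, ← hwx]
        omega
      have := Finset.card_le_card hTsub
      rw [hTcard, Nat.card_Icc] at this
      omega
    omega

/-- For all positive integers `n` and `l`, the set `S(T₁)` of valences of
type-`T₁` super edge-magic labelings of `K_{1,n} ∪ lK_1` (those with the
center label smaller than all leaf labels) consists of consecutive integers:
whenever `k₁, k₂ ∈ S(T₁)` and `k₁ ≤ k ≤ k₂`, also `k ∈ S(T₁)`. -/
theorem stmt_14 (n l : ℕ) (hn : 1 ≤ n) (hl : 1 ≤ l) :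
    ∀ k₁ k₂ k : ℕ,
      (∃ f, IsSuperEdgeMagic (starUnion n l) f k₁ ∧
        ∀ v : Fin (n + l + 1), v ≠ 0 → (v : ℕ) ≤ n →
          f (Sum.inl 0) < f (Sum.inl v)) →
      (∃ f, IsSuperEdgeMagic (starUnion n l) f k₂ ∧
        ∀ v : Fin (n + l + 1), v ≠ 0 → (v : ℕ) ≤ n →
          f (Sum.inl 0) < f (Sum.inl v)) →
      k₁ ≤ k → k ≤ k₂ →
      ∃ f, IsSuperEdgeMagic (starUnion n l) f k ∧
        ∀ v : Fin (n + l + 1), v ≠ 0 → (v : ℕ) ≤ n →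
          f (Sum.inl 0) < f (Sum.inl v) := by
  intro k₁ k₂ k h1 h2 hk1 hk2
  obtain ⟨hlo1, -⟩ := bounds hn hl h1
  obtain ⟨-, hhi2⟩ := bounds hn hl h2
  have hlo : 2*n + l + 4 ≤ k := le_trans hlo1 hk1
  have hhi : k ≤ 2*n + 3*l + 4 := le_trans hk2 hhi2
  by_cases hcase : k ≤ 2*n + 2*l + 4
  · obtain ⟨f, hf⟩ := construct n l 1 (k - 2*n - l - 2) hn hl le_rfl (by omega) (by omega)
    have he : 1 + (k - 2*n - l - 2) + (n+l+1) + n = k := by omega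
    rw [he] at hf
    exact ⟨f, hf⟩
  · obtain ⟨f, hf⟩ := construct n l (k - 2*n - 2*l - 3) (l+2) hn hl (by omega) (by omega)
      (by omega)
    have he : (k - 2*n - 2*l - 3) + (l+2) + (n+l+1) + n = k := by omega
    rw [he] at hf
    exact ⟨f, hf⟩
end
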